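/- Let (V(k))_{k∈ℕ} be a sequence of nonnegative reals with V(k) ≥ κ·2^{2k−1}·2^{−kn} for all k (where κ > 0, n ∈ ℕ), and suppose that for all j ≥ 0 with k₁+2j < k₂−2j one has V(k₁,k₂) > 2^{4nj}·V(k₁+2j, k₂−2j), where V(a,b) := Σ_{k=a}^{b−1} V(k). If k₂ − k₁ ≥ K and j ≈ (k₂−k₁)/4, then V(k₁,k₂) ≥ 2^{n(k₂−k₁)}·κ·2^{2m−1−mn} for some m with k₁ ≤ m ≤ k₂; in particular if V(k₁,k₂) is bounded by a fixed finite total volume for all k₁ < k₂, then for each k₁, k₂ large there exist k₁' , k₂' with k₁ ≤ k₁' < k₂' ≤ k₂ and V(k₁',k₂') ≤ 2^{4n}·V(k₁'+2, k₂'−2). -/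
import Mathlib


/-- The "annulus volume" `V(a,b) = Σ_{k=a}^{b-1} V(k)`. -/
def annVol (V : ℕ → ℝ) (a b : ℕ) : ℝ := ∑ k ∈ Finset.Ico a b, V k

/-- (Volume doubling selection argument.) Let `V k ≥ 0` be
the volumes of dyadic annuli, satisfying the non-collapsing lower bound
`V k ≥ κ · 2^{2k-1} · 2^{-kn}` and whose partial sums `V(k₁,k₂)` are all
bounded by a fixed finite total volume. Then for `k₁` large (and
`k₂ ≈ 3 k₁`, as in Cao–Zhu's choice `k₁ ≈ K/2`, `k₂ ≈ 3K/2`) there is a pair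
`k₁ ≤ a < b ≤ k₂` with the volume doubling property
`V(a,b) ≤ 2^{4n} · V(a+2, b-2)`; otherwise iterating the failed doubling
inequality `V(k₁,k₂) > 2^{4nj} V(k₁+2j, k₂-2j)` for `j ≈ (k₂-k₁)/4` would force
`V(k₁,k₂) ≥ 2^{n(k₂-k₁)} · κ · 2^{2m-1-mn}`, contradicting finite volume. -/
theorem volume_doubling_pair_exists (n : ℕ) (κ Vtot : ℝ) (hκ : 0 < κ)
    (V : ℕ → ℝ) (hVnn : ∀ k, 0 ≤ V k)
    (hlow : ∀ k : ℕ, κ * (2:ℝ) ^ (2 * (k:ℤ) - 1) * (2:ℝ) ^ (-((k * n : ℕ) : ℤ)) ≤ V k)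
    (hbdd : ∀ a b : ℕ, annVol V a b ≤ Vtot) :
    ∃ K₀ : ℕ, ∀ k₁ k₂ : ℕ, K₀ ≤ k₁ → k₂ = 3 * k₁ →
      ∃ a b : ℕ, k₁ ≤ a ∧ a + 4 ≤ b ∧ b ≤ k₂ ∧
        annVol V a b ≤ 2 ^ (4 * n) * annVol V (a + 2) (b - 2) := by
  obtain ⟨N, hN⟩ := pow_unbounded_of_one_lt (Vtot / (κ * (2:ℝ) ^ (-1 - 2*(n:ℤ)))) one_lt_two
  refine ⟨N + 1, fun k₁ k₂ hk₁ hk₂ => ?_⟩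
  by_contra hcon
  push_neg at hcon
  have hk₁pos : 1 ≤ k₁ := le_trans (Nat.le_add_left 1 N) hk₁
  set j : ℕ := (k₁ - 1) / 2 with hj
  have hj2 : 2 * j ≤ k₁ - 1 ∧ k₁ - 1 ≤ 2 * j + 1 := by omega
  -- iterated failed doubling
  have key : ∀ i : ℕ, i ≤ j →
      (2:ℝ) ^ (4 * n * i) * annVol V (k₁ + 2*i) (k₂ - 2*i) ≤ annVol V k₁ k₂ := by
    intro i hi
    induction i with
    | zero => simp
    | succ i ih =>
      have hi' : i ≤ j := Nat.le_of_succ_le hi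
      have h4 : k₁ + 2*i + 4 ≤ k₂ - 2*i := by omega
      have hb : k₂ - 2*i ≤ k₂ := Nat.sub_le _ _
      have hstep := hcon (k₁ + 2*i) (k₂ - 2*i) (Nat.le_add_right _ _) h4 hb
      have hEa : k₁ + 2*i + 2 = k₁ + 2*(i+1) := by ring
      have hEb : k₂ - 2*i - 2 = k₂ - 2*(i+1) := by omega
      rw [hEa, hEb] at hstep
      calc (2:ℝ) ^ (4*n*(i+1)) * annVol V (k₁ + 2*(i+1)) (k₂ - 2*(i+1))
          = (2:ℝ) ^ (4*n*i) * ((2:ℝ) ^ (4*n) * annVol V (k₁ + 2*(i+1)) (k₂ - 2*(i+1))) := by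
            rw [← mul_assoc, ← pow_add]; ring_nf
        _ ≤ (2:ℝ) ^ (4*n*i) * annVol V (k₁ + 2*i) (k₂ - 2*i) := by
            exact mul_le_mul_of_nonneg_left (le_of_lt hstep) (by positivity)
        _ ≤ annVol V k₁ k₂ := ih hi'
  have hmain := key j le_rfl
  set m : ℕ := k₁ + 2*j with hm
  -- the middle annulus is nonempty: m < k₂ - 2*j
  have hmlt : m < k₂ - 2*j := by omega
  have hVm : V m ≤ annVol V m (k₂ - 2*j) := by
    apply Finset.single_le_sum (fun i _ => hVnn i)
    exact Finset.mem_Ico.mpr ⟨le_rfl, hmlt⟩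
  have hlowm := hlow m
  have hchain : (2:ℝ) ^ (4*n*j) * (κ * (2:ℝ) ^ (2*(m:ℤ)-1) * (2:ℝ) ^ (-((m*n:ℕ):ℤ)))
      ≤ annVol V k₁ k₂ := by
    refine le_trans ?_ hmain
    exact mul_le_mul_of_nonneg_left (le_trans hlowm hVm) (by positivity)
  -- rewrite the left side as κ * 2^E
  have hκ2 : (0:ℝ) < κ * (2:ℝ) ^ (-1 - 2*(n:ℤ)) := by positivity
  have hlhs : (2:ℝ) ^ (4*n*j) * (κ * (2:ℝ) ^ (2*(m:ℤ)-1) * (2:ℝ) ^ (-((m*n:ℕ):ℤ)))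
      = κ * (2:ℝ) ^ (((4*n*j:ℕ):ℤ) + (2*(m:ℤ)-1) + (-((m*n:ℕ):ℤ))) := by
    rw [zpow_add₀ (two_ne_zero), zpow_add₀ (two_ne_zero), zpow_natCast]
    ring
  have hexp : (-1 - 2*(n:ℤ)) + ((2*(k₁:ℕ):ℕ):ℤ) ≤
      ((4*n*j:ℕ):ℤ) + (2*(m:ℤ)-1) + (-((m*n:ℕ):ℤ)) := by
    have h1 : ((4*n*j:ℕ):ℤ) = 4*(n:ℤ)*(j:ℤ) := by push_cast; ring
    have h2 : ((m*n:ℕ):ℤ) = ((k₁:ℤ) + 2*(j:ℤ))*(n:ℤ) := by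
      have : (m:ℤ) = (k₁:ℤ) + 2*(j:ℤ) := by exact_mod_cast rfl
      push_cast [hm]; ring
    have h3 : (m:ℤ) = (k₁:ℤ) + 2*(j:ℤ)  := by push_cast [hm]; ring
    have h4 : (k₁:ℤ) - 2 ≤ 2*(j:ℤ) := by exact_mod_cast (by omega : (k₁:ℤ) - 2 ≤ 2*(j:ℤ))
    have h5 : (0:ℤ) ≤ (n:ℤ) := Int.natCast_nonneg n
    have h6 : (0:ℤ) ≤ (j:ℤ) := Int.natCast_nonneg j
    rw [h1, h2, h3]
    push_cast
    nlinarith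
  have hbig : κ * (2:ℝ) ^ (-1 - 2*(n:ℤ)) * (2:ℝ) ^ (2*k₁)
      ≤ annVol V k₁ k₂ := by
    have := zpow_le_zpow_right₀ (one_le_two (α := ℝ)) hexp
    calc κ * (2:ℝ) ^ (-1 - 2*(n:ℤ)) * (2:ℝ) ^ (2*k₁)
        = κ * (2:ℝ) ^ ((-1 - 2*(n:ℤ)) + ((2*k₁:ℕ):ℤ)) := by
          rw [zpow_add₀ (two_ne_zero), zpow_natCast]; ring
      _ ≤ κ * (2:ℝ) ^ (((4*n*j:ℕ):ℤ) + (2*(m:ℤ)-1) + (-((m*n:ℕ):ℤ))) :=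
          mul_le_mul_of_nonneg_left this (le_of_lt hκ)
      _ = _ := hlhs.symm
      _ ≤ annVol V k₁ k₂ := hchain
  -- but Vtot < κ * 2^{-1-2n} * 2^N ≤ κ * 2^{-1-2n} * 2^{2k₁}
  have hVtot : Vtot < κ * (2:ℝ) ^ (-1 - 2*(n:ℤ)) * (2:ℝ) ^ N := by
    rw [← div_lt_iff₀' hκ2] at *
    exact hN
  have hNle : (2:ℝ) ^ N ≤ (2:ℝ) ^ (2*k₁) := by
    apply pow_le_pow_right₀ one_le_two; omega
  have : Vtot < annVol V k₁ k₂ :=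
    lt_of_lt_of_le (lt_of_lt_of_le hVtot
      (mul_le_mul_of_nonneg_left hNle (le_of_lt hκ2))) hbig
  exact absurd (hbdd k₁ k₂) (not_le.mpr this)
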